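/- Let ε₁, ε₂ ∈ {1, −1}, let M, D, K ∈ ℂ^{n×n} satisfy M* = ε₁M, D* = ε₂D, K* = ε₁K, and let (λ₁, x₁) and (λ₂, x₂) be eigenpairs of Q(λ) = λ²M + λD + K (that is, (λⱼ²M + λⱼD + K)xⱼ = 0 with xⱼ ∈ ℂⁿ nonzero). If λ₂ ≠ ε₁ε₂·conj(λ₁), then λ₂·(x₁* M x₂) + ε₁ε₂·conj(λ₁)·(x₁* M x₂) + x₁* D x₂ = 0. -/
import Mathlib


open Matrix

/-- For eigenpairs `(λ₁, x₁)` and `(λ₂, x₂)` of a quadratic matrix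
polynomial with `(*, ε₁, ε₂)`-structure, if `λ₂ ≠ ε₁ε₂·conj(λ₁)` then
`λ₂ x₁ᴴ M x₂ + ε₁ε₂ conj(λ₁) x₁ᴴ M x₂ + x₁ᴴ D x₂ = 0`. -/
theorem quadratic_star_structure_eigvec_orthogonality
    {n : ℕ} (ε₁ ε₂ : ℂ) (hε₁ : ε₁ = 1 ∨ ε₁ = -1) (hε₂ : ε₂ = 1 ∨ ε₂ = -1)
    (M D K : Matrix (Fin n) (Fin n) ℂ)
    (hM : Mᴴ = ε₁ • M) (hD : Dᴴ = ε₂ • D) (hK : Kᴴ = ε₁ • K)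
    (lam₁ lam₂ : ℂ) (x₁ x₂ : Fin n → ℂ) (hx₁ : x₁ ≠ 0) (hx₂ : x₂ ≠ 0)
    (h₁ : (lam₁ ^ 2 • M + lam₁ • D + K).mulVec x₁ = 0)
    (h₂ : (lam₂ ^ 2 • M + lam₂ • D + K).mulVec x₂ = 0)
    (hne : lam₂ ≠ ε₁ * ε₂ * (starRingEnd ℂ) lam₁) :
    lam₂ * (star x₁ ⬝ᵥ M.mulVec x₂) + ε₁ * ε₂ * (starRingEnd ℂ) lam₁ * (star x₁ ⬝ᵥ M.mulVec x₂)
      + star x₁ ⬝ᵥ D.mulVec x₂ = 0 := by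
  set m := star x₁ ⬝ᵥ M.mulVec x₂ with hm
  set d := star x₁ ⬝ᵥ D.mulVec x₂ with hd
  set k := star x₁ ⬝ᵥ K.mulVec x₂ with hk
  have hB : lam₂ ^ 2 * m + lam₂ * d + k = 0 := by
    have := congrArg (fun v => star x₁ ⬝ᵥ v) h₂
    simpa [Matrix.add_mulVec, Matrix.smul_mulVec, dotProduct_add, hm, hd, hk,
      mul_comm] using this
  have h0 : star x₁ ⬝ᵥ ((lam₁ ^ 2 • M + lam₁ • D + K)ᴴ).mulVec x₂ = 0 := by
    rw [dotProduct_mulVec, ← star_mulVec, h₁]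
    simp
  have hA : (starRingEnd ℂ lam₁) ^ 2 * (ε₁ * m) + starRingEnd ℂ lam₁ * (ε₂ * d) + ε₁ * k = 0 := by
    rw [conjTranspose_add, conjTranspose_add, conjTranspose_smul, conjTranspose_smul,
      hM, hD, hK] at h0
    simpa [Matrix.add_mulVec, Matrix.smul_mulVec, dotProduct_add, hm, hd, hk,
      smul_smul, map_pow, mul_assoc, mul_comm, mul_left_comm] using h0
  have hsub : lam₂ - ε₁ * ε₂ * (starRingEnd ℂ) lam₁ ≠ 0 := sub_ne_zero.mpr hne
  apply mul_left_cancel₀ hsub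
  rw [mul_zero]
  rcases hε₁ with rfl | rfl <;> rcases hε₂ with rfl | rfl <;>
    first
      | linear_combination hB - hA
      | linear_combination hB + hA
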